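/- In the two-user routing game on the load-balancing network, if additionally 0 < 4δ < r and c < (r − 4δ)L/δ, then the selfish user 2's best response to user 1's load-taker strategy x₁ = r is the delta-load-taker strategy: x₂ = r − δ is the unique minimizer of J₂(r, ·) over [0, r]. -/

import Mathlib

/-- Elbow latency function with parameters `r, L, δ`. -/
noncomputable def T (r L δ x : ℝ) : ℝ := max 0 (L / δ * (x - r) + L)

/-- Cost of user 1 in the two-user load-balancing game. -/
noncomputable def J₁ (r L δ c x₁ x₂ : ℝ) : ℝ :=
  x₁ * T r L δ (x₁ + (r - x₂)) + (r - x₁) * (c + T r L δ (x₂ + (r - x₁)))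

/-- Cost of user 2 in the two-user load-balancing game. -/
noncomputable def J₂ (r L δ c x₁ x₂ : ℝ) : ℝ :=
  x₂ * T r L δ (x₂ + (r - x₁)) + (r - x₂) * (c + T r L δ (x₁ + (r - x₂)))

lemma J2_eval (r L δ c x₂ : ℝ) (hδ : 0 < δ) (hL : 0 < L) (hx0 : 0 ≤ x₂) (hx1 : x₂ ≤ r) :
    J₂ r L δ c r x₂
      = x₂ * max 0 (L / δ * (x₂ - r) + L) + (r - x₂) * (c + (L / δ * (r - x₂) + L)) := by
  simp only [J₂, T]
  have e1 : x₂ + (r - r) = x₂ := by ring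
  have e2 : r + (r - x₂) - r = r - x₂ := by ring
  rw [e1, e2]
  have h3 : max 0 (L / δ * (r - x₂) + L) = L / δ * (r - x₂) + L := by
    apply max_eq_right
    have : 0 ≤ L / δ * (r - x₂) := mul_nonneg (div_pos hL hδ).le (by linarith)
    linarith
  rw [h3]

lemma key_strict (r L δ c : ℝ) (hδ : 0 < δ) (hδL : δ < L) (hLc : L < c)
    (hcδ : c * δ < r * L) (hr : 4 * δ < r) (hc : c < (r - 4 * δ) * L / δ)
    (x₂ : ℝ) (hx0 : 0 ≤ x₂) (hx1 : x₂ ≤ r) (hne : x₂ ≠ r - δ) :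
    J₂ r L δ c r (r - δ) < J₂ r L δ c r x₂ := by
  have hL : 0 < L := hδ.trans hδL
  have hc' : c * δ < (r - 4 * δ) * L := by
    have := (lt_div_iff₀ hδ).mp hc
    linarith
  have hbase : J₂ r L δ c r (r - δ) = δ * (c + 2 * L) := by
    rw [J2_eval r L δ c (r - δ) hδ hL (by nlinarith) (by linarith)]
    have h1 : L / δ * (r - δ - r) + L = 0 := by field_simp; ring
    have h2 : L / δ * (r - (r - δ)) + L = 2 * L := by field_simp; ring
    rw [h1, h2, max_self]
    ring
  rw [hbase, J2_eval r L δ c x₂ hδ hL hx0 hx1]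
  rcases lt_or_gt_of_ne hne with h | h
  · -- x₂ < r - δ : the max is 0
    have hmax : max 0 (L / δ * (x₂ - r) + L) = 0 := by
      apply max_eq_left
      have hk : 0 < L / δ := div_pos hL hδ
      have : L / δ * (x₂ - r) ≤ L / δ * (-δ) := by
        apply mul_le_mul_of_nonneg_left (by linarith) hk.le
      have hδL' : L / δ * δ = L := div_mul_cancel₀ L hδ.ne'
      nlinarith
    rw [hmax]
    have hid : x₂ * 0 + (r - x₂) * (c + (L / δ * (r - x₂) + L)) - δ * (c + 2 * L)
        = (r - x₂ - δ) * (δ * c + L * (r - x₂) + 2 * δ * L) / δ := by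
      field_simp
      ring
    have hpos : 0 < (r - x₂ - δ) * (δ * c + L * (r - x₂) + 2 * δ * L) / δ := by
      apply div_pos (mul_pos (by linarith) (by nlinarith)) hδ
    linarith
  · -- x₂ > r - δ : the max is L/δ*(x₂-r)+L
    have hmax : max 0 (L / δ * (x₂ - r) + L) = L / δ * (x₂ - r) + L := by
      apply max_eq_right
      have hk : 0 < L / δ := div_pos hL hδ
      have : L / δ * (-δ) ≤ L / δ * (x₂ - r) := by
        apply mul_le_mul_of_nonneg_left (by linarith) hk.le
      have hδL' : L / δ * δ = L := div_mul_cancel₀ L hδ.ne'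
      nlinarith
    rw [hmax]
    have hid : x₂ * (L / δ * (x₂ - r) + L) + (r - x₂) * (c + (L / δ * (r - x₂) + L))
        - δ * (c + 2 * L)
        = (x₂ - (r - δ)) * (r * L - δ * c - 2 * δ * L - 2 * L * (r - x₂)) / δ := by
      field_simp
      ring
    have hpos : 0 < (x₂ - (r - δ)) * (r * L - δ * c - 2 * δ * L - 2 * L * (r - x₂)) / δ := by
      apply div_pos (mul_pos (by linarith) ?_) hδ
      have h1 : r - x₂ < δ := by linarith
      nlinarith
    linarith

theorem best_response_of_selfish_user_is_delta_load_taker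
    (r L δ c : ℝ) (hδ : 0 < δ) (hδL : δ < L) (hLc : L < c) (hcδ : c * δ < r * L)
    (hr : 4 * δ < r) (hc : c < (r - 4 * δ) * L / δ) :
    (r - δ) ∈ Set.Icc (0 : ℝ) r ∧
    (∀ x₂ ∈ Set.Icc (0 : ℝ) r, J₂ r L δ c r (r - δ) ≤ J₂ r L δ c r x₂) ∧
    (∀ x₂ ∈ Set.Icc (0 : ℝ) r, J₂ r L δ c r x₂ = J₂ r L δ c r (r - δ) → x₂ = r - δ) := by
  refine ⟨⟨by linarith, by linarith⟩, ?_, ?_⟩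
  · intro x₂ ⟨h0, h1⟩
    rcases eq_or_ne x₂ (r - δ) with h | h
    · rw [h]
    · exact (key_strict r L δ c hδ hδL hLc hcδ hr hc x₂ h0 h1 h).le
  · intro x₂ ⟨h0, h1⟩ heq
    by_contra h
    exact absurd heq (ne_of_gt (key_strict r L δ c hδ hδL hLc hcδ hr hc x₂ h0 h1 h))
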